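/- Let A ∈ B(H) be an essentially unitary contraction such that ‖Aⁿx‖ → 0 and ‖A*ⁿx‖ → 0 as n → ∞ for every x ∈ H. Then for every T ∈ B(H), lim_{n→∞} ‖TAⁿ‖ = ‖T + K(H)‖, the distance in operator norm from T to the ideal of compact operators. -/

import Mathlib

set_option maxHeartbeats 1000000


open ContinuousLinearMap Filter Topology Metric Set

/-- Key analytic lemma: if `S n` is a sequence of contractions converging to `0`
strongly, and `C` is compact, then `‖S n ∘L C‖ → 0`. -/
lemma aux_comp_compact_tendsto_zero {H : Type*} [NormedAddCommGroup H]
    [InnerProductSpace ℂ H] (S : ℕ → H →L[ℂ] H) (hb : ∀ n, ‖S n‖ ≤ 1)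
    (hpt : ∀ x : H, Tendsto (fun n => ‖S n x‖) atTop (𝓝 0))
    {C : H →L[ℂ] H} (hC : IsCompactOperator ⇑C) :
    Tendsto (fun n => ‖S n ∘L C‖) atTop (𝓝 0) := by
  rw [Metric.tendsto_atTop]
  intro ε hε
  obtain ⟨K, hK, hKmem⟩ := hC
  obtain ⟨r, hr, hball⟩ := Metric.mem_nhds_iff.mp hKmem
  set δ : ℝ := ε * r / 8 with hδdef
  have hδ : 0 < δ := by positivity
  obtain ⟨t, htfin, htcov⟩ := (Metric.totallyBounded_iff.mp hK.totallyBounded) δ hδ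
  have hev : ∀ᶠ n in atTop, ∀ y ∈ t, ‖S n y‖ < δ := by
    rw [eventually_all_finite htfin]
    intro y _
    exact (hpt y).eventually (gt_mem_nhds hδ)
  obtain ⟨N, hN⟩ := hev.exists_forall_of_atTop
  refine ⟨N, fun n hn => ?_⟩
  have hball_bound : ∀ z : H, ‖z‖ < r → ‖S n (C z)‖ ≤ 2 * δ := by
    intro z hz
    have hzK : C z ∈ K := hball (by simpa [mem_ball_zero_iff] using hz)
    obtain ⟨y, hy, hyz⟩ := Set.mem_iUnion₂.mp (htcov hzK)
    have h1 : ‖C z - y‖ < δ := by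
      rw [← dist_eq_norm]; exact mem_ball.mp hyz
    have b1 : ‖S n (C z - y)‖ ≤ ‖C z - y‖ :=
      le_trans (le_opNorm _ _) (mul_le_of_le_one_left (norm_nonneg _) (hb n))
    have b2 : ‖S n y‖ < δ := hN n hn y hy
    calc ‖S n (C z)‖ = ‖S n (C z - y) + S n y‖ := by rw [← map_add, sub_add_cancel]
      _ ≤ ‖S n (C z - y)‖ + ‖S n y‖ := norm_add_le _ _
      _ ≤ 2 * δ := by linarith
  have hop : ‖S n ∘L C‖ ≤ 4 * δ / r := by
    refine opNorm_le_of_shell (f := S n ∘L C) hr (by positivity) (c := (2 : ℂ))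
      (by norm_num) ?_
    intro x hx1 hx2
    have h2 : ‖(2 : ℂ)‖ = 2 := by simp
    rw [h2] at hx1
    have hxr : r / 2 ≤ ‖x‖ := hx1
    calc ‖(S n ∘L C) x‖ = ‖S n (C x)‖ := rfl
      _ ≤ 2 * δ := hball_bound x hx2
      _ = (4 * δ / r) * (r / 2) := by field_simp; ring
      _ ≤ (4 * δ / r) * ‖x‖ := by
          have h0 : (0:ℝ) ≤ 4 * δ / r := by positivity
          exact mul_le_mul_of_nonneg_left hxr h0
  have : (4 : ℝ) * δ / r = ε / 2 := by rw [hδdef]; field_simp; ring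
  rw [this] at hop
  rw [Real.dist_eq, sub_zero, abs_of_nonneg (norm_nonneg _)]
  linarith

theorem stmt_10 {H : Type*} [NormedAddCommGroup H] [InnerProductSpace ℂ H]
    [CompleteSpace H] [TopologicalSpace.SeparableSpace H]
    (hinf : ¬ FiniteDimensional ℂ H)
    (A T : H →L[ℂ] H)
    (hAc : ‖A‖ ≤ 1)
    (hA1 : IsCompactOperator (⇑((1 : H →L[ℂ] H) - adjoint A * A)))
    (hA2 : IsCompactOperator (⇑((1 : H →L[ℂ] H) - A * adjoint A)))
    (hAn : ∀ x : H, Tendsto (fun n : ℕ => ‖(A ^ n) x‖) atTop (𝓝 0))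
    (hAsn : ∀ x : H, Tendsto (fun n : ℕ => ‖((adjoint A) ^ n) x‖) atTop (𝓝 0)) :
    Tendsto (fun n : ℕ => ‖T * A ^ n‖) atTop
      (𝓝 (sInf {r : ℝ | ∃ K : H →L[ℂ] H, IsCompactOperator ⇑K ∧ r = ‖T + K‖})) := by
  set Sset := {r : ℝ | ∃ K : H →L[ℂ] H, IsCompactOperator ⇑K ∧ r = ‖T + K‖} with hSdef
  have hne : Sset.Nonempty := ⟨‖T + 0‖, 0, isCompactOperator_zero, rfl⟩
  have hbdd : BddBelow Sset := ⟨0, fun r hr => by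
    obtain ⟨K, _, rfl⟩ := hr; exact norm_nonneg _⟩
  set d := sInf Sset with hd
  -- norms of powers
  have hpow_le : ∀ (B : H →L[ℂ] H), ‖B‖ ≤ 1 → ∀ n : ℕ, ‖B ^ n‖ ≤ 1 := by
    intro B hB n
    induction n with
    | zero => simpa [ContinuousLinearMap.one_def] using norm_id_le (𝕜 := ℂ) (E := H)
    | succ n ih =>
      rw [pow_succ]
      calc ‖B ^ n * B‖ ≤ ‖B ^ n‖ * ‖B‖ := norm_mul_le _ _
        _ ≤ 1 * 1 := by gcongr
        _ = 1 := one_mul 1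
  have hadj_norm : ‖adjoint A‖ ≤ 1 := by
    rw [LinearIsometryEquiv.norm_map]; exact hAc
  have hApow : ∀ n : ℕ, ‖A ^ n‖ ≤ 1 := hpow_le A hAc
  have hAspow : ∀ n : ℕ, ‖(adjoint A) ^ n‖ ≤ 1 := hpow_le _ hadj_norm
  -- compactness of A^n A*^n - 1
  have h2 : IsCompactOperator ⇑(A * adjoint A - (1 : H →L[ℂ] H)) := by
    have hfun : ⇑(A * adjoint A - (1 : H →L[ℂ] H))
        = -(⇑((1 : H →L[ℂ] H) - A * adjoint A)) := by
      ext x; simp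
    rw [hfun]; exact hA2.neg
  have hcompact : ∀ n : ℕ,
      IsCompactOperator ⇑(A ^ n * (adjoint A) ^ n - (1 : H →L[ℂ] H)) := by
    intro n
    induction n with
    | zero => simpa using isCompactOperator_zero
    | succ n ih =>
      have key : A ^ (n+1) * (adjoint A) ^ (n+1) - (1 : H →L[ℂ] H)
          = A * (A ^ n * (adjoint A) ^ n - 1) * adjoint A + (A * adjoint A - 1) := by
        rw [pow_succ' A, pow_succ (adjoint A)]
        noncomm_ring
      have hc := (ih.clm_comp A).comp_clm (adjoint A)
      have hc' : IsCompactOperator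
          ⇑(A * (A ^ n * (adjoint A) ^ n - 1) * adjoint A) := by
        have : ⇑(A * (A ^ n * (adjoint A) ^ n - 1) * adjoint A)
            = (⇑A ∘ ⇑(A ^ n * (adjoint A) ^ n - (1 : H →L[ℂ] H))) ∘ ⇑(adjoint A) := by
          ext x; simp [ContinuousLinearMap.mul_apply, Function.comp]
        rw [this]; exact hc
      have hfun : ⇑(A ^ (n+1) * (adjoint A) ^ (n+1) - (1 : H →L[ℂ] H))
          = ⇑(A * (A ^ n * (adjoint A) ^ n - 1) * adjoint A)
            + ⇑(A * adjoint A - (1 : H →L[ℂ] H)) := by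
        rw [key]; ext x; simp
      rw [hfun]
      exact hc'.add h2
  -- lower bound
  have hlow : ∀ n : ℕ, d ≤ ‖T * A ^ n‖ := by
    intro n
    have hTcomp : IsCompactOperator ⇑(T * (A ^ n * (adjoint A) ^ n - (1 : H →L[ℂ] H))) := by
      have hc := (hcompact n).clm_comp T
      have : ⇑(T * (A ^ n * (adjoint A) ^ n - (1 : H →L[ℂ] H)))
          = ⇑T ∘ ⇑(A ^ n * (adjoint A) ^ n - (1 : H →L[ℂ] H)) := by
        ext x; simp [ContinuousLinearMap.mul_apply, Function.comp]
      rw [this]; exact hc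
    have hmem : ‖T + T * (A ^ n * (adjoint A) ^ n - (1 : H →L[ℂ] H))‖ ∈ Sset :=
      ⟨_, hTcomp, rfl⟩
    have heq : T + T * (A ^ n * (adjoint A) ^ n - (1 : H →L[ℂ] H))
        = T * A ^ n * (adjoint A) ^ n := by noncomm_ring
    calc d ≤ ‖T + T * (A ^ n * (adjoint A) ^ n - (1 : H →L[ℂ] H))‖ := csInf_le hbdd hmem
      _ = ‖T * A ^ n * (adjoint A) ^ n‖ := by rw [heq]
      _ ≤ ‖T * A ^ n‖ * ‖(adjoint A) ^ n‖ := norm_mul_le _ _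
      _ ≤ ‖T * A ^ n‖ * 1 := by gcongr; exact hAspow n
      _ = ‖T * A ^ n‖ := mul_one _
  -- compact times A^n tends to zero in norm
  have hKA : ∀ K : H →L[ℂ] H, IsCompactOperator ⇑K →
      Tendsto (fun n : ℕ => ‖K * A ^ n‖) atTop (𝓝 0) := by
    intro K hKc
    have hC : IsCompactOperator ⇑(adjoint K ∘L K) := by
      have : ⇑(adjoint K ∘L K) = ⇑(adjoint K) ∘ ⇑K := by
        ext x; simp [Function.comp]
      rw [this]; exact hKc.clm_comp (adjoint K)
    have hmain : Tendsto
        (fun n : ℕ => ‖((adjoint A) ^ n).comp (adjoint K ∘L K)‖) atTop (𝓝 0) :=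
      aux_comp_compact_tendsto_zero (fun n : ℕ => (adjoint A) ^ n) hAspow hAsn hC
    have hsq : ∀ n : ℕ, ‖K * A ^ n‖ * ‖K * A ^ n‖
        ≤ ‖((adjoint A) ^ n).comp (adjoint K ∘L K)‖ := by
      intro n
      have h1 : ‖K * A ^ n‖ * ‖K * A ^ n‖ = ‖adjoint (K * A ^ n) ∘L (K * A ^ n)‖ :=
        (norm_adjoint_comp_self (K * A ^ n)).symm
      have hp : adjoint (A ^ n) = (adjoint A) ^ n := by
        rw [← star_eq_adjoint, star_pow, star_eq_adjoint]
      have h2' : adjoint (K * A ^ n) ∘L (K * A ^ n)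
          = ((adjoint A) ^ n).comp (adjoint K ∘L K) * A ^ n := by
        have hm : K * A ^ n = K ∘L A ^ n := rfl
        rw [hm, adjoint_comp, hp]
        ext x
        simp [ContinuousLinearMap.mul_apply]
      rw [h1, h2']
      calc ‖((adjoint A) ^ n).comp (adjoint K ∘L K) * A ^ n‖
          ≤ ‖((adjoint A) ^ n).comp (adjoint K ∘L K)‖ * ‖A ^ n‖ := norm_mul_le _ _
        _ ≤ ‖((adjoint A) ^ n).comp (adjoint K ∘L K)‖ * 1 :=
            mul_le_mul_of_nonneg_left (hApow n) (norm_nonneg _)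
        _ = _ := mul_one _
    have hle : ∀ n : ℕ, ‖K * A ^ n‖
        ≤ Real.sqrt ‖((adjoint A) ^ n).comp (adjoint K ∘L K)‖ := by
      intro n
      exact Real.le_sqrt_of_sq_le (by rw [sq]; exact hsq n)
    have hsqrt : Tendsto (fun n : ℕ =>
        Real.sqrt ‖((adjoint A) ^ n).comp (adjoint K ∘L K)‖) atTop (𝓝 0) := by
      have := (Real.continuous_sqrt.tendsto 0).comp hmain
      simpa [Real.sqrt_zero, Function.comp_def] using this
    exact squeeze_zero (fun n => norm_nonneg _) hle hsqrt
  -- conclusion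
  rw [Metric.tendsto_atTop]
  intro ε hε
  obtain ⟨s, hsmem, hslt⟩ : ∃ s ∈ Sset, s < d + ε / 2 :=
    exists_lt_of_csInf_lt hne (by linarith)
  obtain ⟨K, hKc, rfl⟩ := hsmem
  have hKAev : ∀ᶠ n in atTop, ‖K * A ^ n‖ < ε / 2 :=
    (hKA K hKc).eventually (gt_mem_nhds (by linarith))
  obtain ⟨N, hN⟩ := hKAev.exists_forall_of_atTop
  refine ⟨N, fun n hn => ?_⟩
  have hup : ‖T * A ^ n‖ < d + ε := by
    have hsplit : T * A ^ n = (T + K) * A ^ n - K * A ^ n := by noncomm_ring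
    calc ‖T * A ^ n‖ = ‖(T + K) * A ^ n - K * A ^ n‖ := by rw [← hsplit]
      _ ≤ ‖(T + K) * A ^ n‖ + ‖K * A ^ n‖ := norm_sub_le _ _
      _ ≤ ‖T + K‖ * ‖A ^ n‖ + ‖K * A ^ n‖ := by gcongr; exact norm_mul_le _ _
      _ ≤ ‖T + K‖ * 1 + ‖K * A ^ n‖ := by gcongr; exact hApow n
      _ < ‖T + K‖ + ε / 2 := by rw [mul_one]; gcongr; exact hN n hn
      _ < (d + ε / 2) + ε / 2 := by gcongr
      _ = d + ε := by ring
  have hlo := hlow n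
  rw [Real.dist_eq, abs_of_nonneg (by linarith)]
  linarith
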